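/- Let A ∈ B(H) and φ an Orlicz function. Then φ(w(A)²) ≤ (1/4)·‖φ(|A|²) + φ(|A*|²)‖ + (1/2)·φ(w(|A|·|A*|)). -/

import Mathlib

/-- An Orlicz function: convex, continuous, non-decreasing on `[0, ∞)`,
vanishing at `0`, positive on `(0, ∞)`, and tending to infinity. -/
def IsOrliczFunction (φ : ℝ → ℝ) : Prop :=
  ConvexOn ℝ (Set.Ici 0) φ ∧ ContinuousOn φ (Set.Ici 0) ∧ MonotoneOn φ (Set.Ici 0) ∧
    φ 0 = 0 ∧ (∀ u : ℝ, 0 < u → 0 < φ u) ∧ Filter.Tendsto φ Filter.atTop Filter.atTop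

/-- The numerical radius of a bounded operator on a complex Hilbert space. -/
noncomputable def numRad {H : Type*} [NormedAddCommGroup H] [InnerProductSpace ℂ H]
    (A : H →L[ℂ] H) : ℝ :=
  ⨆ x : {x : H // ‖x‖ = 1}, ‖(inner ℂ (A x.1) x.1 : ℂ)‖

/-- The modulus `|A| = (A*A)^{1/2}`, via continuous functional calculus. -/
noncomputable def absOp {H : Type*} [NormedAddCommGroup H] [InnerProductSpace ℂ H]
    [CompleteSpace H] (A : H →L[ℂ] H) : H →L[ℂ] H :=
  cfc Real.sqrt (ContinuousLinearMap.adjoint A * A)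

variable {H : Type*} [NormedAddCommGroup H] [InnerProductSpace ℂ H] [CompleteSpace H]

set_option maxHeartbeats 1000000

section Aux

open scoped InnerProductSpace
open RCLike ContinuousLinearMap Polynomial

local notation "ad" => ContinuousLinearMap.adjoint

lemma reflect_norm (x u : H) (hx : ‖x‖ = 1) :
    ‖(2 : ℂ) • (⟪x, u⟫_ℂ • x) - u‖ = ‖u‖ := by
  have h := norm_sub_sq (𝕜 := ℂ) ((2 : ℂ) • (⟪x, u⟫_ℂ • x)) u
  have h2 : ‖(2 : ℂ) • (⟪x, u⟫_ℂ • x)‖ ^ 2 = 4 * ‖⟪x, u⟫_ℂ‖ ^ 2 := by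
    rw [norm_smul, norm_smul, hx]
    simp; ring
  have h3 : re (⟪(2 : ℂ) • (⟪x, u⟫_ℂ • x), u⟫_ℂ) = 2 * ‖⟪x, u⟫_ℂ‖ ^ 2 := by
    rw [inner_smul_left, inner_smul_left]
    have : (starRingEnd ℂ) ⟪x, u⟫_ℂ * ⟪x, u⟫_ℂ = (‖⟪x, u⟫_ℂ‖ : ℂ) ^ 2 := by
      rw [Complex.conj_mul']
    rw [this]
    simp [← Complex.ofReal_pow]
  nlinarith [sq_nonneg (‖(2 : ℂ) • (⟪x, u⟫_ℂ • x) - u‖ - ‖u‖),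
    norm_nonneg ((2 : ℂ) • (⟪x, u⟫_ℂ • x) - u), norm_nonneg u]

lemma buzano (x u v : H) (hx : ‖x‖ = 1) :
    ‖⟪u, x⟫_ℂ * ⟪x, v⟫_ℂ‖ ≤ (‖u‖ * ‖v‖ + ‖⟪u, v⟫_ℂ‖) / 2 := by
  have key : ⟪(2 : ℂ) • (⟪x, u⟫_ℂ • x) - u, v⟫_ℂ
      = (2 : ℂ) * (⟪u, x⟫_ℂ * ⟪x, v⟫_ℂ) - ⟪u, v⟫_ℂ := by
    rw [inner_sub_left, inner_smul_left, inner_smul_left, inner_conj_symm]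
    simp [map_ofNat]
  have hb : ‖(2 : ℂ) * (⟪u, x⟫_ℂ * ⟪x, v⟫_ℂ) - ⟪u, v⟫_ℂ‖ ≤ ‖u‖ * ‖v‖ := by
    rw [← key]
    calc ‖⟪(2 : ℂ) • (⟪x, u⟫_ℂ • x) - u, v⟫_ℂ‖ ≤ ‖(2 : ℂ) • (⟪x, u⟫_ℂ • x) - u‖ * ‖v‖ :=
          norm_inner_le_norm _ _
      _ = ‖u‖ * ‖v‖ := by rw [reflect_norm x u hx]
  have h4 := norm_sub_norm_le ((2 : ℂ) * (⟪u, x⟫_ℂ * ⟪x, v⟫_ℂ)) (⟪u, v⟫_ℂ)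
  rw [norm_mul] at h4
  have h2 : ‖(2 : ℂ)‖ = 2 := by norm_num
  rw [h2] at h4
  linarith

lemma support_line {φ : ℝ → ℝ} (hφ : ConvexOn ℝ (Set.Ici 0) φ) {s : ℝ} (hs : 0 < s) :
    ∃ a : ℝ, ∀ t ∈ Set.Ici (0:ℝ), φ s + a * (t - s) ≤ φ t := by
  set K : Set ℝ := (fun t => (φ s - φ t) / (s - t)) '' (Set.Ico 0 s) with hK
  have hne : K.Nonempty := ⟨_, ⟨0, ⟨le_refl 0, hs⟩, rfl⟩⟩
  have hmem : ∀ u > s, ∀ z ∈ K, z ≤ (φ u - φ s) / (u - s) := by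
    rintro u hu z ⟨t, ⟨ht0, hts⟩, rfl⟩
    have h := hφ.slope_mono_adjacent (x := t) (y := s) (z := u) ht0 (le_of_lt (hs.trans hu)) hts hu
    simpa only [slope_def_field] using h
  have hbdd : BddAbove K := ⟨(φ (s+1) - φ s) / (s + 1 - s), fun z hz => hmem (s+1) (by linarith) z hz⟩
  refine ⟨sSup K, fun t ht => ?_⟩
  rcases lt_trichotomy t s with h | h | h
  · -- t < s : slope(t,s) ≤ sSup K
    have hin : (φ s - φ t) / (s - t) ∈ K := ⟨t, ⟨ht, h⟩, rfl⟩
    have := le_csSup hbdd hin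
    have hst : (0:ℝ) < s - t := by linarith
    rw [div_le_iff₀ hst] at this
    nlinarith [this]
  · simp [h]
  · -- s < t
    have := csSup_le hne (fun z hz => hmem t h z hz)
    have hst : (0:ℝ) < t - s := by linarith
    rw [le_div_iff₀ hst] at this
    nlinarith [this]

lemma inner_re_nonneg {T : H →L[ℂ] H} (hT : 0 ≤ T) (x : H) : 0 ≤ re ⟪T x, x⟫_ℂ :=
  (Complex.le_def.mp (((ContinuousLinearMap.nonneg_iff_isPositive T).mp hT).inner_nonneg_left x)).1

lemma jensen_inner {T : H →L[ℂ] H} (hT : 0 ≤ T) {φ : ℝ → ℝ}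
    (hconv : ConvexOn ℝ (Set.Ici 0) φ) (hcont : ContinuousOn φ (Set.Ici 0))
    (hmono : MonotoneOn φ (Set.Ici 0)) (hφ0 : φ 0 = 0) {x : H} (hx : ‖x‖ = 1) :
    φ (re ⟪T x, x⟫_ℂ) ≤ re ⟪cfc φ T x, x⟫_ℂ := by
  have hsa : IsSelfAdjoint T := IsSelfAdjoint.of_nonneg hT
  have hspec : spectrum ℝ T ⊆ Set.Ici 0 := fun t ht => spectrum_nonneg_of_nonneg hT ht
  have hcont' : ContinuousOn φ (spectrum ℝ T) := hcont.mono hspec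
  have hφnn : ∀ t ∈ Set.Ici (0:ℝ), 0 ≤ φ t := fun t ht => hφ0 ▸ hmono (Set.mem_Ici.mpr (le_refl 0)) ht ht
  set s := re ⟪T x, x⟫_ℂ with hsdef
  have hs0 : 0 ≤ s := inner_re_nonneg hT x
  rcases eq_or_lt_of_le hs0 with h | h
  · rw [← h, hφ0]
    exact inner_re_nonneg (cfc_nonneg (fun t ht => hφnn t (hspec ht))) x
  · obtain ⟨a, ha⟩ := support_line hconv h
    set g : ℝ → ℝ := fun t => φ s + a * (t - s) with hg
    have hgle : 0 ≤ cfc φ T - cfc g T := by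
      rw [← cfc_sub _ _ T (hcont') (by fun_prop)]
      exact cfc_nonneg fun t ht => by
        have := ha t (hspec ht); simp [hg]; linarith
    have hcfcg : cfc g T = (φ s - a * s) • (1 : H →L[ℂ] H) + a • T := by
      have : g = fun t => (φ s - a * s) + a * t := by funext t; simp [hg]; ring
      rw [this, cfc_add (a := T) _ _ (by fun_prop) (by fun_prop), cfc_const _ _ hsa,
        cfc_const_mul _ _ T (by fun_prop), cfc_id' ℝ T hsa, Algebra.algebraMap_eq_smul_one]
    have hgval : re ⟪cfc g T x, x⟫_ℂ = φ s := by
      rw [hcfcg]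
      have hxx : ⟪x, x⟫_ℂ = 1 := by
        rw [inner_self_eq_norm_sq_to_K, hx]; norm_num
      simp only [ContinuousLinearMap.add_apply, ContinuousLinearMap.smul_apply,
        ContinuousLinearMap.one_apply, inner_add_left, map_add,
        RCLike.real_smul_eq_coe_smul (K := ℂ), inner_smul_real_left, hxx, Complex.smul_re,
        Complex.one_re]
      rw [hsdef]
      set z := ⟪T x, x⟫_ℂ
      simp [Complex.ext_iff]
    have := inner_re_nonneg hgle x
    simp only [ContinuousLinearMap.sub_apply, inner_sub_left, map_sub] at this
    linarith [hgval ▸ this]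

lemma adj_mul_self_nonneg (A : H →L[ℂ] H) : 0 ≤ ad A * A := by
  simpa [ContinuousLinearMap.star_eq_adjoint] using star_mul_self_nonneg A

lemma self_mul_adj_nonneg (A : H →L[ℂ] H) : 0 ≤ A * ad A := by
  have := star_mul_self_nonneg (ad A)
  simpa [ContinuousLinearMap.star_eq_adjoint, ContinuousLinearMap.adjoint_adjoint] using this

lemma spec_adj_mul_self (A : H →L[ℂ] H) [Nontrivial H] :
    spectrum ℝ (ad A * A) ⊆ Set.Icc 0 (‖A‖ * ‖A‖) := by
  intro t ht
  refine ⟨spectrum_nonneg_of_nonneg (adj_mul_self_nonneg A) ht, ?_⟩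
  have := spectrum.norm_le_norm_of_mem ht
  rw [ContinuousLinearMap.mul_def, ContinuousLinearMap.norm_adjoint_comp_self A] at this
  calc t ≤ |t| := le_abs_self t
    _ ≤ _ := this

lemma spec_self_mul_adj (A : H →L[ℂ] H) [Nontrivial H] :
    spectrum ℝ (A * ad A) ⊆ Set.Icc 0 (‖A‖ * ‖A‖) := by
  intro t ht
  refine ⟨spectrum_nonneg_of_nonneg (self_mul_adj_nonneg A) ht, ?_⟩
  have := spectrum.norm_le_norm_of_mem ht
  have e : A * ad A = ad (ad A) * (ad A) := by rw [ContinuousLinearMap.adjoint_adjoint]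
  rw [e, ContinuousLinearMap.mul_def, ContinuousLinearMap.norm_adjoint_comp_self (ad A)] at this
  have hA : ‖ad A‖ = ‖A‖ := by
    rw [← ContinuousLinearMap.star_eq_adjoint]; exact norm_star A
  rw [hA] at this
  calc t ≤ |t| := le_abs_self t
    _ ≤ _ := this

lemma pow_intertwine (A : H →L[ℂ] H) (n : ℕ) :
    A * (ad A * A) ^ n = (A * ad A) ^ n * A := by
  induction n with
  | zero => simp
  | succ n ih =>
    rw [pow_succ, ← mul_assoc, ih, pow_succ]
    noncomm_ring

lemma aeval_intertwine (A : H →L[ℂ] H) (p : ℝ[X]) :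
    A * (aeval (ad A * A) p) = (aeval (A * ad A) p) * A := by
  induction p using Polynomial.induction_on' with
  | add p q hp hq => simp [map_add, mul_add, add_mul, hp, hq]
  | monomial n c =>
    simp only [aeval_monomial, Algebra.algebraMap_eq_smul_one, smul_mul_assoc, one_mul,
      mul_smul_comm, pow_intertwine]

lemma cfc_intertwine [Nontrivial H] (A : H →L[ℂ] H) {f : ℝ → ℝ}
    (hf : ContinuousOn f (Set.Icc 0 (‖A‖ * ‖A‖))) :
    A * cfc f (ad A * A) = cfc f (A * ad A) * A := by
  have hsa1 : IsSelfAdjoint (ad A * A) := IsSelfAdjoint.of_nonneg (adj_mul_self_nonneg A)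
  have hsa2 : IsSelfAdjoint (A * ad A) := IsSelfAdjoint.of_nonneg (self_mul_adj_nonneg A)
  have hf1 : ContinuousOn f (spectrum ℝ (ad A * A)) := hf.mono (spec_adj_mul_self A)
  have hf2 : ContinuousOn f (spectrum ℝ (A * ad A)) := hf.mono (spec_self_mul_adj A)
  rw [← sub_eq_zero, ← norm_eq_zero]
  refine le_antisymm (le_of_forall_pos_le_add fun ε hε => ?_) (norm_nonneg _)
  rw [zero_add]
  obtain ⟨p, hp⟩ := exists_polynomial_near_of_continuousOn 0 (‖A‖ * ‖A‖) f hf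
    (ε / (2 * ‖A‖ + 1)) (by positivity)
  have hεA : 0 ≤ ε / (2 * ‖A‖ + 1) := by positivity
  have h1 : ‖cfc f (ad A * A) - cfc p.eval (ad A * A)‖ ≤ ε / (2 * ‖A‖ + 1) := by
    rw [← cfc_sub _ _ _ hf1 (by fun_prop)]
    exact norm_cfc_le hεA fun t ht => by
      rw [Real.norm_eq_abs, abs_sub_comm]
      exact le_of_lt (hp t (spec_adj_mul_self A ht))
  have h2 : ‖cfc f (A * ad A) - cfc p.eval (A * ad A)‖ ≤ ε / (2 * ‖A‖ + 1) := by
    rw [← cfc_sub _ _ _ hf2 (by fun_prop)]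
    exact norm_cfc_le hεA fun t ht => by
      rw [Real.norm_eq_abs, abs_sub_comm]
      exact le_of_lt (hp t (spec_self_mul_adj A ht))
  have hpoly : A * cfc p.eval (ad A * A) = cfc p.eval (A * ad A) * A := by
    rw [cfc_polynomial p (ad A * A) hsa1, cfc_polynomial p (A * ad A) hsa2]
    exact aeval_intertwine A p
  have key : A * cfc f (ad A * A) - cfc f (A * ad A) * A
      = A * (cfc f (ad A * A) - cfc p.eval (ad A * A))
        - (cfc f (A * ad A) - cfc p.eval (A * ad A)) * A := by
    rw [mul_sub, sub_mul, hpoly]; abel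
  rw [key]
  calc ‖_ - _‖ ≤ ‖A * (cfc f (ad A * A) - cfc p.eval (ad A * A))‖
        + ‖(cfc f (A * ad A) - cfc p.eval (A * ad A)) * A‖ := norm_sub_le _ _
    _ ≤ ‖A‖ * (ε / (2 * ‖A‖ + 1)) + (ε / (2 * ‖A‖ + 1)) * ‖A‖ := by
        gcongr
        · exact (norm_mul_le _ _).trans (by gcongr)
        · exact (norm_mul_le _ _).trans (by gcongr)
    _ ≤ ε := by
        rw [div_eq_inv_mul]
        have h3 : (0:ℝ) < 2 * ‖A‖ + 1 := by positivity
        rw [← sub_nonneg]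
        have : ε - (‖A‖ * ((2 * ‖A‖ + 1)⁻¹ * ε) + (2 * ‖A‖ + 1)⁻¹ * ε * ‖A‖)
            = ε * (1 - 2 * ‖A‖ * (2 * ‖A‖ + 1)⁻¹) := by ring
        rw [this]
        have : 2 * ‖A‖ * (2 * ‖A‖ + 1)⁻¹ ≤ 1 := by
          rw [← div_eq_mul_inv, div_le_one h3]; linarith
        nlinarith [le_of_lt hε]

lemma sqrt_add_le' {t ε : ℝ} (ht : 0 ≤ t) (hε : 0 ≤ ε) :
    Real.sqrt (t + ε) ≤ Real.sqrt t + Real.sqrt ε := by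
  have h := Real.sqrt_le_sqrt (show t + ε ≤ (Real.sqrt t + Real.sqrt ε)^2 by
    nlinarith [Real.sq_sqrt ht, Real.sq_sqrt hε, Real.sqrt_nonneg t, Real.sqrt_nonneg ε])
  rwa [Real.sqrt_sq (by positivity)] at h

lemma re_inner_le_norm_op (T : H →L[ℂ] H) (z : H) : re ⟪T z, z⟫_ℂ ≤ ‖T‖ * ‖z‖^2 := by
  calc re ⟪T z, z⟫_ℂ ≤ ‖⟪T z, z⟫_ℂ‖ := RCLike.re_le_norm _
    _ ≤ ‖T z‖ * ‖z‖ := norm_inner_le_norm _ _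
    _ ≤ ‖T‖ * ‖z‖ * ‖z‖ := by gcongr; exact T.le_opNorm z
    _ = ‖T‖ * ‖z‖^2 := by ring

lemma symm_inner {T : H →L[ℂ] H} (hT : IsSelfAdjoint T) (u v : H) :
    ⟪T u, v⟫_ℂ = ⟪u, T v⟫_ℂ :=
  (ContinuousLinearMap.isSelfAdjoint_iff_isSymmetric.mp hT) u v

lemma mixed_schwarz [Nontrivial H] (A : H →L[ℂ] H) (x y : H) :
    ‖⟪A x, y⟫_ℂ‖^2 ≤ re ⟪cfc Real.sqrt (ad A * A) x, x⟫_ℂ * re ⟪cfc Real.sqrt (A * ad A) y, y⟫_ℂ := by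
  set S1 := ad A * A with hS1
  set S2 := A * ad A with hS2
  have hsa1 : IsSelfAdjoint S1 := IsSelfAdjoint.of_nonneg (adj_mul_self_nonneg A)
  have hsa2 : IsSelfAdjoint S2 := IsSelfAdjoint.of_nonneg (self_mul_adj_nonneg A)
  have hsp1 : spectrum ℝ S1 ⊆ Set.Ici 0 := fun t ht => (spec_adj_mul_self A ht).1
  have hsp2 : spectrum ℝ S2 ⊆ Set.Ici 0 := fun t ht => (spec_self_mul_adj A ht).1
  set a := re ⟪cfc Real.sqrt S1 x, x⟫_ℂ with hadef
  set b := re ⟪cfc Real.sqrt S2 y, y⟫_ℂ with hbdef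
  have ha0 : 0 ≤ a := inner_re_nonneg (cfc_nonneg fun t ht => Real.sqrt_nonneg t) x
  have hb0 : 0 ≤ b := inner_re_nonneg (cfc_nonneg fun t ht => Real.sqrt_nonneg t) y
  -- main ε-estimate
  have main : ∀ ε : ℝ, 0 < ε →
      ‖⟪A x, y⟫_ℂ‖^2 ≤ (a + Real.sqrt ε * ‖x‖^2) * (b + Real.sqrt ε * ‖y‖^2) := by
    intro ε hε
    set r : ℝ → ℝ := fun t => Real.sqrt (t + ε) with hr
    set i : ℝ → ℝ := fun t => (Real.sqrt (t + ε))⁻¹ with hi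
    set q : ℝ → ℝ := fun t => Real.sqrt (Real.sqrt (t + ε)) with hq
    set h : ℝ → ℝ := fun t => t * (Real.sqrt (t + ε))⁻¹ with hh
    have hrpos : ∀ t : ℝ, 0 ≤ t → 0 < Real.sqrt (t + ε) :=
      fun t ht => Real.sqrt_pos.mpr (by linarith)
    have hrc : ContinuousOn r (Set.Ici 0) := by
      apply Real.continuous_sqrt.comp_continuousOn
      fun_prop
    have hic : ContinuousOn i (Set.Ici 0) := by
      apply ContinuousOn.inv₀
      · exact Real.continuous_sqrt.comp_continuousOn (by fun_prop)
      · exact fun t ht => ne_of_gt (hrpos t ht)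
    have hqc : ContinuousOn q (Set.Ici 0) := by
      apply Real.continuous_sqrt.comp_continuousOn
      exact Real.continuous_sqrt.comp_continuousOn (by fun_prop)
    have hhc : ContinuousOn h (Set.Ici 0) := continuousOn_id.mul hic
    set R := cfc r S1 with hR
    set Iε := cfc i S1 with hIe
    set Q := cfc q S1 with hQ
    have hQsa : IsSelfAdjoint Q := cfc_predicate q S1
    have hIsa : IsSelfAdjoint Iε := cfc_predicate i S1
    have hIR : Iε * R = 1 := by
      rw [hIe, hR, ← cfc_mul i r S1 (hic.mono hsp1) (hrc.mono hsp1)]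
      rw [← cfc_one (R := ℝ) S1 hsa1]
      apply cfc_congr
      intro t ht
      exact inv_mul_cancel₀ (ne_of_gt (hrpos t (hsp1 ht)))
    have hQQ : Q * Q = R := by
      rw [hQ, hR, ← cfc_mul q q S1 (hqc.mono hsp1) (hqc.mono hsp1)]
      apply cfc_congr
      intro t ht
      exact Real.mul_self_sqrt (Real.sqrt_nonneg _)
    set U := A * Iε with hU
    have hA : A = U * R := by rw [hU, mul_assoc, hIR, mul_one]
    have hUadj : ad U = Iε * ad A := by
      rw [hU, ← ContinuousLinearMap.star_eq_adjoint, ← ContinuousLinearMap.star_eq_adjoint,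
        star_mul, hIsa.star_eq]
    -- inner product bound
    have hQz : ∀ z : H, ‖Q z‖^2 = re ⟪R z, z⟫_ℂ := by
      intro z
      have e : ⟪R z, z⟫_ℂ = ⟪Q z, Q z⟫_ℂ := by
        rw [← hQQ]
        exact symm_inner hQsa (Q z) z
      rw [e, inner_self_eq_norm_sq]
    have step1 : ‖⟪A x, y⟫_ℂ‖ ≤ ‖Q x‖ * ‖Q (ad U y)‖ := by
      have e1 : ⟪A x, y⟫_ℂ = ⟪Q x, Q (ad U y)⟫_ℂ := by
        conv_lhs => rw [hA]
        have e2 : (U * R) x = U (R x) := rfl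
        rw [e2, ← ContinuousLinearMap.adjoint_inner_right U (R x) y]
        have e3 : R x = Q (Q x) := by rw [← hQQ]; rfl
        rw [e3, symm_inner hQsa]
      rw [e1]
      exact norm_inner_le_norm _ _
    have hURU : U ∘L (R ∘L ad U) = cfc h S2 := by
      have assoc : U ∘L (R ∘L ad U) = A * ((Iε * R) * (Iε * ad A)) := by
        rw [hUadj, hU]
        rfl
      rw [assoc, hIR, one_mul, ← mul_assoc]
      have hint : A * Iε = cfc i S2 * A := by
        rw [hIe, hS1, hS2]
        exact cfc_intertwine A (hic.mono (fun t ht => ht.1))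
      rw [hint, mul_assoc, ← hS2]
      have e4 := cfc_mul i (fun t : ℝ => t) S2 (hic.mono hsp2) (by fun_prop)
      rw [cfc_id' ℝ S2 hsa2] at e4
      rw [← e4]
      apply cfc_congr
      intro t ht
      simp [hh, hi, mul_comm]
    have hQy : ‖Q (ad U y)‖^2 = re ⟪cfc h S2 y, y⟫_ℂ := by
      rw [hQz]
      have e1 : ⟪R (ad U y), ad U y⟫_ℂ = ⟪U (R (ad U y)), y⟫_ℂ :=
        ContinuousLinearMap.adjoint_inner_right U (R (ad U y)) y
      rw [e1, ← hURU]
      rfl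
    -- small perturbation bounds
    have small : ∀ (T : H →L[ℂ] H), IsSelfAdjoint T → ∀ (f g : ℝ → ℝ),
        ContinuousOn f (spectrum ℝ T) → ContinuousOn g (spectrum ℝ T) →
        (∀ t ∈ spectrum ℝ T, |f t - g t| ≤ Real.sqrt ε) → ∀ z : H,
        re ⟪cfc f T z, z⟫_ℂ ≤ re ⟪cfc g T z, z⟫_ℂ + Real.sqrt ε * ‖z‖^2 := by
      intro T hsa f g hfc hgc hbound z
      have e : re ⟪cfc f T z, z⟫_ℂ - re ⟪cfc g T z, z⟫_ℂ
          = re ⟪(cfc f T - cfc g T) z, z⟫_ℂ := by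
        simp [ContinuousLinearMap.sub_apply, inner_sub_left]
      have hb : re ⟪(cfc f T - cfc g T) z, z⟫_ℂ ≤ Real.sqrt ε * ‖z‖^2 := by
        calc re ⟪(cfc f T - cfc g T) z, z⟫_ℂ ≤ ‖cfc f T - cfc g T‖ * ‖z‖^2 :=
              re_inner_le_norm_op _ z
          _ ≤ Real.sqrt ε * ‖z‖^2 := by
              gcongr
              rw [← cfc_sub f g T hfc hgc]
              exact norm_cfc_le (Real.sqrt_nonneg ε) fun t ht => by
                rw [Real.norm_eq_abs]; exact hbound t ht
      linarith [e ▸ hb]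
    have hr_bound : ∀ t ∈ spectrum ℝ S1, |r t - Real.sqrt t| ≤ Real.sqrt ε := by
      intro t ht
      have ht0 : 0 ≤ t := hsp1 ht
      have h1 : Real.sqrt t ≤ r t := by
        simp only [hr]
        exact Real.sqrt_le_sqrt (by linarith)
      have h2 : r t ≤ Real.sqrt t + Real.sqrt ε := sqrt_add_le' ht0 (le_of_lt hε)
      rw [abs_le]
      constructor <;> [linarith [Real.sqrt_nonneg ε]; linarith]
    have hh_bound : ∀ t ∈ spectrum ℝ S2, |h t - Real.sqrt t| ≤ Real.sqrt ε := by
      intro t ht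
      have ht0 : 0 ≤ t := hsp2 ht
      have hste : 0 < Real.sqrt (t + ε) := hrpos t ht0
      have hst : 0 ≤ Real.sqrt t := Real.sqrt_nonneg t
      have hsq : Real.sqrt t ^ 2 = t := Real.sq_sqrt ht0
      have hsqe : Real.sqrt (t + ε) ^ 2 = t + ε := Real.sq_sqrt (by linarith)
      have hmono : Real.sqrt t ≤ Real.sqrt (t + ε) := Real.sqrt_le_sqrt (by linarith)
      have hle : Real.sqrt (t + ε) ≤ Real.sqrt t + Real.sqrt ε := sqrt_add_le' ht0 (le_of_lt hε)
      have h1 : h t ≤ Real.sqrt t := by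
        simp only [hh]
        rw [mul_inv_le_iff₀ hste]
        nlinarith
      have h2 : Real.sqrt t - h t ≤ Real.sqrt ε := by
        have key : (Real.sqrt t - Real.sqrt ε) * Real.sqrt (t + ε) ≤ t := by
          nlinarith [mul_le_mul_of_nonneg_left (show Real.sqrt (t + ε) - Real.sqrt t ≤ Real.sqrt ε by linarith) hst,
            mul_le_mul_of_nonneg_right hmono (Real.sqrt_nonneg ε)]
        have h3 := (le_div_iff₀ hste).mpr key
        have h4 : h t = t / Real.sqrt (t + ε) := by simp [hh, div_eq_mul_inv]
        linarith
      rw [abs_le]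
      constructor <;> linarith
    -- combine
    have c1 : re ⟪R x, x⟫_ℂ ≤ a + Real.sqrt ε * ‖x‖^2 := by
      rw [hadef]
      exact small S1 hsa1 r Real.sqrt (hrc.mono hsp1)
        (Real.continuous_sqrt.continuousOn) hr_bound x
    have c2 : re ⟪cfc h S2 y, y⟫_ℂ ≤ b + Real.sqrt ε * ‖y‖^2 := by
      rw [hbdef]
      exact small S2 hsa2 h Real.sqrt (hhc.mono hsp2)
        (Real.continuous_sqrt.continuousOn) hh_bound y
    have hRx0 : 0 ≤ re ⟪R x, x⟫_ℂ := by rw [← hQz x]; exact sq_nonneg _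
    have hhy0 : 0 ≤ re ⟪cfc h S2 y, y⟫_ℂ := by rw [← hQy]; exact sq_nonneg _
    calc ‖⟪A x, y⟫_ℂ‖^2 ≤ (‖Q x‖ * ‖Q (ad U y)‖)^2 := by
          have := step1
          have h0 : 0 ≤ ‖⟪A x, y⟫_ℂ‖ := norm_nonneg _
          nlinarith
      _ = re ⟪R x, x⟫_ℂ * re ⟪cfc h S2 y, y⟫_ℂ := by
          rw [mul_pow, hQz x, hQy]
      _ ≤ (a + Real.sqrt ε * ‖x‖^2) * (b + Real.sqrt ε * ‖y‖^2) := by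
          apply mul_le_mul c1 c2 hhy0
          have := mul_nonneg (Real.sqrt_nonneg ε) (sq_nonneg ‖x‖)
          linarith
  -- take the limit ε → 0⁺
  have lim : Filter.Tendsto (fun ε : ℝ => (a + Real.sqrt ε * ‖x‖^2) * (b + Real.sqrt ε * ‖y‖^2))
      (nhdsWithin 0 (Set.Ioi 0)) (nhds (a * b)) := by
    have : Filter.Tendsto (fun ε : ℝ => (a + Real.sqrt ε * ‖x‖^2) * (b + Real.sqrt ε * ‖y‖^2))
        (nhds 0) (nhds ((a + Real.sqrt 0 * ‖x‖^2) * (b + Real.sqrt 0 * ‖y‖^2))) := by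
      apply Filter.Tendsto.mul <;> apply Filter.Tendsto.add tendsto_const_nhds <;>
        exact (Real.continuous_sqrt.tendsto 0).mul tendsto_const_nhds
    simpa using this.mono_left nhdsWithin_le_nhds
  exact ge_of_tendsto lim (Filter.eventually_iff_exists_mem.mpr
    ⟨Set.Ioi 0, self_mem_nhdsWithin, fun ε hε => main ε hε⟩)

lemma numRad_bdd (A : H →L[ℂ] H) :
    BddAbove (Set.range fun x : {x : H // ‖x‖ = 1} => ‖(inner ℂ (A x.1) x.1 : ℂ)‖) := by
  refine ⟨‖A‖, ?_⟩
  rintro z ⟨x, rfl⟩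
  calc ‖(inner ℂ (A x.1) x.1 : ℂ)‖ ≤ ‖A x.1‖ * ‖x.1‖ := norm_inner_le_norm _ _
    _ ≤ ‖A‖ * ‖x.1‖ * ‖x.1‖ := by gcongr; exact A.le_opNorm _
    _ = ‖A‖ := by rw [x.2]; ring

lemma le_numRad (A : H →L[ℂ] H) {x : H} (hx : ‖x‖ = 1) :
    ‖(inner ℂ (A x) x : ℂ)‖ ≤ numRad A :=
  le_ciSup (numRad_bdd A) (⟨x, hx⟩ : {x : H // ‖x‖ = 1})

lemma numRad_nonneg (A : H →L[ℂ] H) : 0 ≤ numRad A := by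
  by_cases hH : Nonempty {x : H // ‖x‖ = 1}
  · obtain ⟨x⟩ := hH
    exact le_trans (norm_nonneg _) (le_numRad A x.2)
  · rw [numRad, @Real.iSup_of_isEmpty _ (not_nonempty_iff.mp hH)]

lemma sqrt_mul_self_op {S : H →L[ℂ] H} (hS : 0 ≤ S) :
    cfc Real.sqrt S * cfc Real.sqrt S = S := by
  have hsa : IsSelfAdjoint S := IsSelfAdjoint.of_nonneg hS
  have h := cfc_mul Real.sqrt Real.sqrt S Real.continuous_sqrt.continuousOn
    Real.continuous_sqrt.continuousOn
  rw [← h]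
  have h2 : cfc (fun x : ℝ => Real.sqrt x * Real.sqrt x) S = cfc (fun t : ℝ => t) S := by
    apply cfc_congr
    intro t ht
    exact Real.mul_self_sqrt (spectrum_nonneg_of_nonneg hS ht)
  rw [h2, cfc_id' ℝ S hsa]

theorem stmt19 (A : H →L[ℂ] H) (φ : ℝ → ℝ) (hφ : IsOrliczFunction φ) :
    φ (numRad A ^ 2) ≤
      (1 / 4) * ‖cfc φ (ContinuousLinearMap.adjoint A * A) +
        cfc φ (A * ContinuousLinearMap.adjoint A)‖ +
      (1 / 2) * φ (numRad (absOp A * absOp (ContinuousLinearMap.adjoint A))) := by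
  obtain ⟨hconv, hcont, hmono, hφ0, hposφ, -⟩ := hφ
  set S1 := ContinuousLinearMap.adjoint A * A with hS1
  set S2 := A * ContinuousLinearMap.adjoint A with hS2
  have habs2 : absOp (ContinuousLinearMap.adjoint A) = cfc Real.sqrt S2 := by
    rw [absOp, ContinuousLinearMap.adjoint_adjoint]
  have habs1 : absOp A = cfc Real.sqrt S1 := rfl
  set T := absOp A * absOp (ContinuousLinearMap.adjoint A) with hT
  set w₀ := numRad T with hw₀
  have hw0 : 0 ≤ w₀ := numRad_nonneg T
  by_cases hH : ∃ x : H, ‖x‖ = 1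
  case neg =>
    haveI : IsEmpty {x : H // ‖x‖ = 1} := ⟨fun x => hH ⟨x.1, x.2⟩⟩
    have h1 : numRad A = 0 := Real.iSup_of_isEmpty _
    have h2 : w₀ = 0 := Real.iSup_of_isEmpty _
    rw [h1, h2]
    norm_num [hφ0]
  case pos =>
    obtain ⟨x₀, hx₀⟩ := hH
    haveI : Nontrivial H := ⟨⟨x₀, 0, fun h => by rw [h] at hx₀; simp at hx₀⟩⟩
    set C := (1 / 4) * ‖cfc φ S1 + cfc φ S2‖ + (1 / 2) * φ w₀ with hC
    have hS1pos : 0 ≤ S1 := adj_mul_self_nonneg A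
    have hS2pos : 0 ≤ S2 := self_mul_adj_nonneg A
    set B1 := cfc Real.sqrt S1 with hB1
    set B2 := cfc Real.sqrt S2 with hB2
    have hB1sa : IsSelfAdjoint B1 := cfc_predicate Real.sqrt S1
    have hB2sa : IsSelfAdjoint B2 := cfc_predicate Real.sqrt S2
    have key : ∀ x : H, ‖x‖ = 1 → φ (‖(inner ℂ (A x) x : ℂ)‖ ^ 2) ≤ C := by
      intro x hx
      set α := ‖(inner ℂ (A x) x : ℂ)‖ with hα
      set u := B1 x with hu
      set v := B2 x with hv
      set s1 := re ⟪S1 x, x⟫_ℂ with hs1def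
      set s2 := re ⟪S2 x, x⟫_ℂ with hs2def
      have hs1 : 0 ≤ s1 := inner_re_nonneg hS1pos x
      have hs2 : 0 ≤ s2 := inner_re_nonneg hS2pos x
      have ha0 : 0 ≤ re ⟪u, x⟫_ℂ := inner_re_nonneg (cfc_nonneg fun t _ => Real.sqrt_nonneg t) x
      have hb0 : 0 ≤ re ⟪v, x⟫_ℂ := inner_re_nonneg (cfc_nonneg fun t _ => Real.sqrt_nonneg t) x
      -- mixed Schwarz
      have hms : α ^ 2 ≤ re ⟪u, x⟫_ℂ * re ⟪v, x⟫_ℂ := mixed_schwarz A x x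
      -- pass to Buzano
      have hab : re ⟪u, x⟫_ℂ * re ⟪v, x⟫_ℂ ≤ ‖⟪u, x⟫_ℂ * ⟪x, v⟫_ℂ‖ := by
        rw [norm_mul]
        have e : ‖⟪x, v⟫_ℂ‖ = ‖⟪v, x⟫_ℂ‖ := by rw [← inner_conj_symm, norm_conj]
        rw [e]
        exact mul_le_mul (re_le_norm _) (re_le_norm _) hb0 (norm_nonneg _)
      have hbz := buzano x u v hx
      -- norms of u, v
      have hu2 : ‖u‖ ^ 2 = s1 := by
        rw [hs1def, ← sqrt_mul_self_op hS1pos, ← hB1]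
        have e1 : (B1 * B1) x = B1 (B1 x) := rfl
        rw [e1, symm_inner hB1sa (B1 x) x, ← hu, inner_self_eq_norm_sq]
      have hv2 : ‖v‖ ^ 2 = s2 := by
        rw [hs2def, ← sqrt_mul_self_op hS2pos, ← hB2]
        have e1 : (B2 * B2) x = B2 (B2 x) := rfl
        rw [e1, symm_inner hB2sa (B2 x) x, ← hv, inner_self_eq_norm_sq]
      -- the numerical radius term
      have huv : ‖⟪u, v⟫_ℂ‖ ≤ w₀ := by
        have e1 : ⟪u, v⟫_ℂ = ⟪(B2 * B1) x, x⟫_ℂ := by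
          have : (B2 * B1) x = B2 (B1 x) := rfl
          rw [this, symm_inner hB2sa (B1 x) x, ← hu, ← hv]
        have e2 : B2 * B1 = ad T := by
          rw [hT, habs1, habs2, ← ContinuousLinearMap.star_eq_adjoint, star_mul,
            hB1sa.star_eq, hB2sa.star_eq]
        have e3 : ‖⟪(ad T) x, x⟫_ℂ‖ = ‖⟪T x, x⟫_ℂ‖ := by
          rw [ContinuousLinearMap.adjoint_inner_left, ← inner_conj_symm, norm_conj]
        rw [e1, e2, e3]
        exact le_numRad T hx
      -- scalar inequality
      have scal : α ^ 2 ≤ (1 / 4) * (s1 + s2) + (1 / 2) * w₀ := by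
        have hAMGM : ‖u‖ * ‖v‖ ≤ (s1 + s2) / 2 := by
          rw [← hu2, ← hv2]
          nlinarith [sq_nonneg (‖u‖ - ‖v‖), norm_nonneg u, norm_nonneg v]
        calc α ^ 2 ≤ re ⟪u, x⟫_ℂ * re ⟪v, x⟫_ℂ := hms
          _ ≤ ‖⟪u, x⟫_ℂ * ⟪x, v⟫_ℂ‖ := hab
          _ ≤ (‖u‖ * ‖v‖ + ‖⟪u, v⟫_ℂ‖) / 2 := hbz
          _ ≤ ((s1 + s2) / 2 + w₀) / 2 := by gcongr
          _ = (1 / 4) * (s1 + s2) + (1 / 2) * w₀ := by ring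
      -- convexity and Jensen
      have hαnn : (0:ℝ) ≤ α ^ 2 := sq_nonneg _
      have hrhs0 : (0:ℝ) ≤ (1 / 4) * (s1 + s2) + (1 / 2) * w₀ := by positivity
      have m1 : φ (α ^ 2) ≤ φ ((1 / 4) * (s1 + s2) + (1 / 2) * w₀) :=
        hmono hαnn hrhs0 scal
      have m2 : φ ((1 / 4) * (s1 + s2) + (1 / 2) * w₀)
          ≤ (1 / 2) * φ ((s1 + s2) / 2) + (1 / 2) * φ w₀ := by
        have h := hconv.2 (x := (s1 + s2) / 2) (y := w₀) (by positivity : (0:ℝ) ≤ (s1+s2)/2)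
          hw0 (by norm_num : (0:ℝ) ≤ 1/2) (by norm_num : (0:ℝ) ≤ 1/2) (by norm_num)
        simp only [smul_eq_mul] at h
        calc φ ((1 / 4) * (s1 + s2) + (1 / 2) * w₀)
            = φ ((1/2) * ((s1 + s2) / 2) + (1/2) * w₀) := by ring_nf
          _ ≤ (1 / 2) * φ ((s1 + s2) / 2) + (1 / 2) * φ w₀ := h
      have m3 : φ ((s1 + s2) / 2) ≤ (1 / 2) * φ s1 + (1 / 2) * φ s2 := by
        have h := hconv.2 (x := s1) (y := s2) hs1 hs2
          (by norm_num : (0:ℝ) ≤ 1/2) (by norm_num : (0:ℝ) ≤ 1/2) (by norm_num)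
        simp only [smul_eq_mul] at h
        calc φ ((s1 + s2) / 2) = φ ((1/2) * s1 + (1/2) * s2) := by ring_nf
          _ ≤ (1 / 2) * φ s1 + (1 / 2) * φ s2 := h
      have j1 : φ s1 ≤ re ⟪cfc φ S1 x, x⟫_ℂ := jensen_inner hS1pos hconv hcont hmono hφ0 hx
      have j2 : φ s2 ≤ re ⟪cfc φ S2 x, x⟫_ℂ := jensen_inner hS2pos hconv hcont hmono hφ0 hx
      have hsum : re ⟪cfc φ S1 x, x⟫_ℂ + re ⟪cfc φ S2 x, x⟫_ℂ
          = re ⟪(cfc φ S1 + cfc φ S2) x, x⟫_ℂ := by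
        simp [ContinuousLinearMap.add_apply, inner_add_left]
      have hnb : re ⟪(cfc φ S1 + cfc φ S2) x, x⟫_ℂ ≤ ‖cfc φ S1 + cfc φ S2‖ := by
        have h := re_inner_le_norm_op (cfc φ S1 + cfc φ S2) x
        rw [hx] at h
        simpa using h
      rw [hC]
      linarith
    -- supremum argument
    set E := Set.range fun x : {x : H // ‖x‖ = 1} => ‖(inner ℂ (A x.1) x.1 : ℂ)‖ with hE
    have hEne : E.Nonempty := ⟨_, ⟨⟨x₀, hx₀⟩, rfl⟩⟩
    have hEbdd : BddAbove E := numRad_bdd A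
    have hsup : numRad A = sSup E := rfl
    obtain ⟨un, -, hutend, humem⟩ := exists_seq_tendsto_sSup hEne hEbdd
    have hCge : ∀ n, φ (un n ^ 2) ≤ C := by
      intro n
      obtain ⟨x, hxeq⟩ := humem n
      rw [← hxeq]
      exact key x.1 x.2
    have hunn : ∀ n, 0 ≤ un n := by
      intro n
      obtain ⟨x, hxeq⟩ := humem n
      rw [← hxeq]
      exact norm_nonneg _
    have h2 : Filter.Tendsto (fun n => un n ^ 2) Filter.atTop (nhds (numRad A ^ 2)) := by
      rw [hsup]
      exact hutend.pow 2
    have hcw : ContinuousWithinAt φ (Set.Ici 0) (numRad A ^ 2) := hcont _ (Set.mem_Ici.mpr (sq_nonneg _))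
    have h3 : Filter.Tendsto (fun n => φ (un n ^ 2)) Filter.atTop (nhds (φ (numRad A ^ 2))) :=
      hcw.tendsto.comp (tendsto_nhdsWithin_iff.mpr
        ⟨h2, Filter.Eventually.of_forall fun n => Set.mem_Ici.mpr (sq_nonneg _)⟩)
    exact le_of_tendsto h3 (Filter.Eventually.of_forall hCge)

end Aux
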